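/- Let a, c, d : ℝ → ℝ be continuous functions. Index ℝ⁴ by the four states (0,0), (0,1), (1,0), (1,1) and let Λ : ℝ → Matrix (four states) (four states) ℝ have rows: state (0,0): (−(a(u)+c(u)), a(u), 0, c(u)); state (0,1): (0, −d(u), 0, d(u)); state (1,0): (0, 0, −(a(u)+c(u)), a(u)+c(u)); state (1,1): (0, 0, 0, 0). Fix t₀ ≥ 0 and suppose p, q : ℝ → (four states → ℝ) each satisfy the Kolmogorov forward equation (for every s ≥ t₀ and state y, the coordinate s ↦ p_y(s) has derivative (p(s)·Λ(s))_y at s, and similarly for q), with p(t₀) = the indicator of state (0,0) and q(t₀) = the indicator of state (1,0). Then for all s ≥ t₀: p_{(0,1)}(s) + p_{(1,1)}(s) = q_{(0,1)}(s) + q_{(1,1)}(s). -/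

import Mathlib

/-- (Systemic importance, eq. (6.13) of the paper.) For the generator
with rows `(0,0) : (−(a+c), a, 0, c)`, `(0,1) : (0, −d, 0, d)`,
`(1,0) : (0, 0, −(a+c), a+c)`, `(1,1) : 0`, solutions `p` and `q` of the Kolmogorov
forward equation started at time `t₀` from the point masses at `(0,0)` and at `(1,0)`
respectively give the same default probability for the second component:
`p_{(0,1)} + p_{(1,1)} = q_{(0,1)} + q_{(1,1)}`. -/
theorem systemic_importance_second_default_independent (a c d : ℝ → ℝ)
    (ha : Continuous a) (hc : Continuous c) (hd : Continuous d)
    (Λ : ℝ → Matrix (Fin 2 × Fin 2) (Fin 2 × Fin 2) ℝ)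
    (hΛ : ∀ u : ℝ, Λ u = Matrix.of fun x y =>
      if x = ((0 : Fin 2), (0 : Fin 2)) then
        (if y = ((0 : Fin 2), (0 : Fin 2)) then -(a u + c u)
        else if y = ((0 : Fin 2), (1 : Fin 2)) then a u
        else if y = ((1 : Fin 2), (0 : Fin 2)) then 0
        else c u)
      else if x = ((0 : Fin 2), (1 : Fin 2)) then
        (if y = ((0 : Fin 2), (1 : Fin 2)) then -(d u)
        else if y = ((1 : Fin 2), (1 : Fin 2)) then d u
        else 0)
      else if x = ((1 : Fin 2), (0 : Fin 2)) then
        (if y = ((1 : Fin 2), (0 : Fin 2)) then -(a u + c u)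
        else if y = ((1 : Fin 2), (1 : Fin 2)) then a u + c u
        else 0)
      else 0)
    (t₀ : ℝ) (ht₀ : 0 ≤ t₀)
    (p q : ℝ → (Fin 2 × Fin 2) → ℝ)
    (hp0 : p t₀ = fun x => if x = ((0 : Fin 2), (0 : Fin 2)) then 1 else 0)
    (hq0 : q t₀ = fun x => if x = ((1 : Fin 2), (0 : Fin 2)) then 1 else 0)
    (hpode : ∀ s : ℝ, t₀ ≤ s → ∀ y : Fin 2 × Fin 2,
      HasDerivAt (fun u => p u y) (∑ x, p s x * Λ s x y) s)
    (hqode : ∀ s : ℝ, t₀ ≤ s → ∀ y : Fin 2 × Fin 2,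
      HasDerivAt (fun u => q u y) (∑ x, q s x * Λ s x y) s) :
    ∀ s : ℝ, t₀ ≤ s →
      p s ((0 : Fin 2), (1 : Fin 2)) + p s ((1 : Fin 2), (1 : Fin 2)) =
        q s ((0 : Fin 2), (1 : Fin 2)) + q s ((1 : Fin 2), (1 : Fin 2)) := by
  -- g : difference of survival masses of the first component's "no second default" states
  set g : ℝ → ℝ := fun s =>
    (p s ((0 : Fin 2), (0 : Fin 2)) + p s ((1 : Fin 2), (0 : Fin 2))) -
      (q s ((0 : Fin 2), (0 : Fin 2)) + q s ((1 : Fin 2), (0 : Fin 2))) with hgdef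
  have hg0 : g t₀ = 0 := by simp [hgdef, hp0, hq0, Prod.ext_iff]
  have hgder : ∀ s : ℝ, t₀ ≤ s → HasDerivAt g (-(a s + c s) * g s) s := by
    intro s hs
    have h1 := hpode s hs ((0 : Fin 2), (0 : Fin 2))
    have h2 := hpode s hs ((1 : Fin 2), (0 : Fin 2))
    have h3 := hqode s hs ((0 : Fin 2), (0 : Fin 2))
    have h4 := hqode s hs ((1 : Fin 2), (0 : Fin 2))
    have := ((h1.add h2).sub (h3.add h4))
    refine this.congr_deriv (Eq.symm ?_)
    simp [hΛ, Fintype.sum_prod_type, Fin.sum_univ_two, Prod.ext_iff, hgdef]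
    ring
  -- integrating factor
  have hac : Continuous fun u => a u + c u := ha.add hc
  set I : ℝ → ℝ := fun s => ∫ u in t₀..s, (a u + c u) with hIdef
  have hIder : ∀ s : ℝ, HasDerivAt I (a s + c s) s := by
    intro s
    exact intervalIntegral.integral_hasDerivAt_right (hac.intervalIntegrable _ _)
      (hac.stronglyMeasurable.stronglyMeasurableAtFilter) hac.continuousAt
  set F : ℝ → ℝ := fun s => g s * Real.exp (I s) with hFdef
  have hFder : ∀ s : ℝ, t₀ ≤ s → HasDerivAt F 0 s := by
    intro s hs
    have hE : HasDerivAt (fun u => Real.exp (I u)) (Real.exp (I s) * (a s + c s)) s :=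
      (hIder s).exp
    have := (hgder s hs).mul hE
    refine this.congr_deriv (Eq.symm ?_)
    ring
  have hgzero : ∀ s : ℝ, t₀ ≤ s → g s = 0 := by
    intro s hs
    have hcont : ContinuousOn F (Set.Icc t₀ s) := fun x hx =>
      ((hFder x hx.1).continuousAt).continuousWithinAt
    have hFs : F s = F t₀ :=
      constant_of_has_deriv_right_zero hcont
        (fun x hx => (hFder x hx.1).hasDerivWithinAt) s (Set.right_mem_Icc.2 hs)
    have hFt : F t₀ = 0 := by simp [hFdef, hg0]
    have hF0 : F s = 0 := hFs.trans hFt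
    have : g s * Real.exp (I s) = 0 := by simpa only [hFdef] using hF0
    exact (mul_eq_zero.1 this).resolve_right (Real.exp_ne_zero _)
  -- h : difference of second-default probabilities
  set h : ℝ → ℝ := fun s =>
    (p s ((0 : Fin 2), (1 : Fin 2)) + p s ((1 : Fin 2), (1 : Fin 2))) -
      (q s ((0 : Fin 2), (1 : Fin 2)) + q s ((1 : Fin 2), (1 : Fin 2))) with hhdef
  have hh0 : h t₀ = 0 := by simp [hhdef, hp0, hq0, Prod.ext_iff]
  have hhder : ∀ s : ℝ, t₀ ≤ s → HasDerivAt h 0 s := by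
    intro s hs
    have h1 := hpode s hs ((0 : Fin 2), (1 : Fin 2))
    have h2 := hpode s hs ((1 : Fin 2), (1 : Fin 2))
    have h3 := hqode s hs ((0 : Fin 2), (1 : Fin 2))
    have h4 := hqode s hs ((1 : Fin 2), (1 : Fin 2))
    have := ((h1.add h2).sub (h3.add h4))
    refine this.congr_deriv (Eq.symm ?_)
    have hg := hgzero s hs
    simp only [hgdef, Prod.mk_zero_zero] at hg
    simp [hΛ, Fintype.sum_prod_type, Fin.sum_univ_two, Prod.ext_iff]
    linear_combination (-(a s + c s)) * hg
  intro s hs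
  have hcont : ContinuousOn h (Set.Icc t₀ s) := fun x hx =>
    ((hhder x hx.1).continuousAt).continuousWithinAt
  have hhs : h s = h t₀ :=
    constant_of_has_deriv_right_zero hcont
      (fun x hx => (hhder x hx.1).hasDerivWithinAt) s (Set.right_mem_Icc.2 hs)
  have : h s = 0 := hhs.trans hh0
  simpa [hhdef, sub_eq_zero] using this
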